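/- arXiv:2604.00562 — 3 statements merged into one kernel-verified Lean document; each statement's English description precedes it below -/
import Mathlib

section
/- Equality case in the Hölder-type combination: for s ∈ (0,1), N > 1 real, and positive reals f0, f1, u0, u1, equality ((1-s)f0 + s f1)^{1/N} · ((1-s)u0 + s u1)^{(N-1)/N} = (1-s) f0^{1/N} u0^{(N-1)/N} + s f1^{1/N} u1^{(N-1)/N} holds if and only if f0/u0 = f1/u1. -/
open Real Set

/-- Equality case in the Hölder-type combination of means: equality holds
iff `f0/u0 = f1/u1`. -/
theorem holder_combination_eq_iff (s N f0 f1 u0 u1 : ℝ) (hs : s ∈ Ioo (0:ℝ) 1) (hN : 1 < N)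
    (hf0 : 0 < f0) (hf1 : 0 < f1) (hu0 : 0 < u0) (hu1 : 0 < u1) :
    ((1 - s) * f0 + s * f1) ^ (1 / N) * ((1 - s) * u0 + s * u1) ^ ((N - 1) / N) =
      (1 - s) * f0 ^ (1 / N) * u0 ^ ((N - 1) / N) + s * f1 ^ (1 / N) * u1 ^ ((N - 1) / N) ↔
    f0 / u0 = f1 / u1 := by
  obtain ⟨hs0, hs1⟩ := hs
  have hs1' : 0 < 1 - s := by linarith
  have hN0 : (0:ℝ) < N := by linarith
  set p : ℝ := 1 / N with hp
  have hp0 : 0 < p := by positivity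
  have hp1 : p < 1 := by
    rw [hp, div_lt_one hN0]; linarith
  have hexp : (N - 1) / N = 1 - p := by
    rw [hp, one_sub_div hN0.ne']
  set U : ℝ := (1 - s) * u0 + s * u1 with hU
  have hUpos : 0 < U := by positivity
  set a : ℝ := f0 / u0 with ha
  set b : ℝ := f1 / u1 with hb
  have ha0 : 0 < a := by positivity
  have hb0 : 0 < b := by positivity
  set v : ℝ := (1 - s) * u0 / U with hv
  set w : ℝ := s * u1 / U with hw
  have hv0 : 0 < v := by positivity
  have hw0 : 0 < w := by positivity
  have hvw : v + w = 1 := by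
    rw [hv, hw, ← add_div, div_eq_one_iff_eq hUpos.ne', hU]
  -- rewrite LHS of the equality
  have hF : (1 - s) * f0 + s * f1 = U * (v * a + w * b) := by
    rw [hv, hw, ha, hb]
    field_simp
  have hL : ((1 - s) * f0 + s * f1) ^ p * U ^ ((N - 1) / N) = U * (v * a + w * b) ^ p := by
    rw [hF, hexp, mul_rpow hUpos.le (by positivity),
      mul_comm (U ^ p), mul_assoc, ← rpow_add hUpos,
      show p + (1 - p) = 1 by ring, rpow_one, mul_comm]
  -- rewrite each RHS term
  have h0 : (1 - s) * f0 ^ p * u0 ^ ((N - 1) / N) = U * (v * a ^ p) := by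
    rw [hexp, ha, div_rpow hf0.le hu0.le, hv]
    rw [rpow_sub hu0, rpow_one]
    field_simp
  have h1 : s * f1 ^ p * u1 ^ ((N - 1) / N) = U * (w * b ^ p) := by
    rw [hexp, hb, div_rpow hf1.le hu1.le, hw]
    rw [rpow_sub hu1, rpow_one]
    field_simp
  rw [hL, h0, h1, ← mul_add, mul_right_inj' hUpos.ne']
  constructor
  · intro h
    by_contra hab
    have := (Real.strictConcaveOn_rpow hp0 hp1).2 (mem_Ici.2 ha0.le) (mem_Ici.2 hb0.le)
      (fun hh => hab hh) hv0 hw0 hvw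
    simp only [smul_eq_mul] at this
    linarith
  · intro h
    have hab : a = b := h
    rw [hab, ← add_mul, hvw, one_mul, ← add_mul, hvw, one_mul]
end

section
/- ODE comparison: let κ ∈ ℝ with κ·r² < π² (no conjugate point condition), and let u : [0,1] → (0,∞) be C² with u'' ≤ -κ u on (0,1). Define w(t) = (σ((1-t))/σ(1))·u(0) + (σ(t)/σ(1))·u(1), where σ(t) = sin(√κ t)/√κ if κ > 0, σ(t) = t if κ = 0, σ(t) = sinh(√(-κ) t)/√(-κ) if κ < 0. Then u(t) ≥ w(t) for all t ∈ [0,1]. -/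
open Real Set

/-- The solution `σ` of `σ'' = -κ σ`, `σ(0) = 0`, `σ'(0) = 1`. -/
noncomputable def sigmaK (κ t : ℝ) : ℝ :=
  if 0 < κ then Real.sin (Real.sqrt κ * t) / Real.sqrt κ
  else if κ = 0 then t
  else Real.sinh (Real.sqrt (-κ) * t) / Real.sqrt (-κ)

noncomputable def sigmaK' (κ t : ℝ) : ℝ :=
  if 0 < κ then Real.cos (Real.sqrt κ * t)
  else if κ = 0 then 1
  else Real.cosh (Real.sqrt (-κ) * t)

lemma sigmaK_zero (κ : ℝ) : sigmaK κ 0 = 0 := by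
  unfold sigmaK
  split_ifs <;> simp

lemma sigmaK_hasDerivAt (κ t : ℝ) : HasDerivAt (sigmaK κ) (sigmaK' κ t) t := by
  unfold sigmaK sigmaK'
  split_ifs with h h0
  · have ha : Real.sqrt κ ≠ 0 := ne_of_gt (Real.sqrt_pos.2 h)
    have h1 : HasDerivAt (fun t : ℝ => Real.sin (Real.sqrt κ * t))
        (Real.cos (Real.sqrt κ * t) * (Real.sqrt κ * 1)) t :=
      (Real.hasDerivAt_sin _).comp t ((hasDerivAt_id t).const_mul _)
    have := h1.div_const (Real.sqrt κ)
    exact this.congr_deriv (by rw [mul_one, mul_div_assoc, div_self ha, mul_one])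
  · exact hasDerivAt_id' t
  · have ha : Real.sqrt (-κ) ≠ 0 := ne_of_gt (Real.sqrt_pos.2 (by
      cases lt_trichotomy κ 0 with
      | inl h' => linarith
      | inr h' => cases h' with
        | inl h' => exact absurd h' h0
        | inr h' => exact absurd h' h))
    have h1 : HasDerivAt (fun t : ℝ => Real.sinh (Real.sqrt (-κ) * t))
        (Real.cosh (Real.sqrt (-κ) * t) * (Real.sqrt (-κ) * 1)) t :=
      (Real.hasDerivAt_sinh _).comp t ((hasDerivAt_id t).const_mul _)
    have := h1.div_const (Real.sqrt (-κ))
    exact this.congr_deriv (by rw [mul_one, mul_div_assoc, div_self ha, mul_one])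

lemma sigmaK'_hasDerivAt (κ t : ℝ) : HasDerivAt (sigmaK' κ) (-κ * sigmaK κ t) t := by
  unfold sigmaK sigmaK'
  split_ifs with h h0
  · have ha : Real.sqrt κ ≠ 0 := ne_of_gt (Real.sqrt_pos.2 h)
    have hsq : Real.sqrt κ * Real.sqrt κ = κ := Real.mul_self_sqrt h.le
    have h1 : HasDerivAt (fun t : ℝ => Real.cos (Real.sqrt κ * t))
        (-Real.sin (Real.sqrt κ * t) * (Real.sqrt κ * 1)) t :=
      (Real.hasDerivAt_cos _).comp t ((hasDerivAt_id t).const_mul _)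
    convert h1 using 1
    field_simp
    linear_combination Real.sin (Real.sqrt κ * t) * hsq
  · simpa [h0] using (hasDerivAt_const t (1:ℝ))
  · have hpos : 0 < -κ := by
      rcases lt_trichotomy κ 0 with h' | h' | h'
      · linarith
      · exact absurd h' h0
      · exact absurd h' h
    have ha : Real.sqrt (-κ) ≠ 0 := ne_of_gt (Real.sqrt_pos.2 hpos)
    have hsq : Real.sqrt (-κ) * Real.sqrt (-κ) = -κ := Real.mul_self_sqrt hpos.le
    have h1 : HasDerivAt (fun t : ℝ => Real.cosh (Real.sqrt (-κ) * t))
        (Real.sinh (Real.sqrt (-κ) * t) * (Real.sqrt (-κ) * 1)) t :=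
      (Real.hasDerivAt_cosh _).comp t ((hasDerivAt_id t).const_mul _)
    convert h1 using 1
    field_simp
    linear_combination (-1 : ℝ) * Real.sinh (Real.sqrt (-κ) * t) * hsq

lemma comparison_core (κ : ℝ) (u w w' : ℝ → ℝ)
    (hu : ContDiffOn ℝ 2 u (Icc 0 1)) (hupos : ∀ t ∈ Icc (0:ℝ) 1, 0 < u t)
    (hu'' : ∀ t ∈ Ioo (0:ℝ) 1, deriv (deriv u) t ≤ -κ * u t)
    (hw : ∀ t, HasDerivAt w (w' t) t)
    (hw' : ∀ t, HasDerivAt w' (-κ * w t) t)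
    (hb0 : w 0 = u 0) (hb1 : w 1 = u 1) :
    ∀ t ∈ Icc (0:ℝ) 1, w t ≤ u t := by
  by_contra hcon
  push_neg at hcon
  obtain ⟨t₀, ht₀, hlt⟩ := hcon
  set v : ℝ → ℝ := fun x => w x - u x with hvdef
  have hwc : Continuous w := continuous_iff_continuousAt.2 fun t => (hw t).continuousAt
  have hw'c : Continuous w' := continuous_iff_continuousAt.2 fun t => (hw' t).continuousAt
  have hucont : ContinuousOn u (Icc 0 1) := hu.continuousOn
  have hvcont : ContinuousOn v (Icc 0 1) := hwc.continuousOn.sub hucont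
  have hv0 : v 0 = 0 := by simp [hvdef, hb0]
  have hv1 : v 1 = 0 := by simp [hvdef, hb1]
  have hvt₀ : 0 < v t₀ := sub_pos.2 hlt
  have ht₀I : t₀ ∈ Ioo (0:ℝ) 1 := by
    constructor
    · rcases eq_or_lt_of_le ht₀.1 with h | h
      · exfalso; rw [← h] at hvt₀; rw [hv0] at hvt₀; exact lt_irrefl 0 hvt₀
      · exact h
    · rcases eq_or_lt_of_le ht₀.2 with h | h
      · exfalso; rw [h] at hvt₀; rw [hv1] at hvt₀; exact lt_irrefl 0 hvt₀
      · exact h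
  -- derivatives of u on the open interval
  have hu2 : ContDiffOn ℝ 2 u (Ioo 0 1) := hu.mono Ioo_subset_Icc_self
  have huD : ∀ x ∈ Ioo (0:ℝ) 1, HasDerivAt u (deriv u x) x := fun x hx =>
    ((hu2.differentiableOn (by norm_num)).differentiableAt
      (isOpen_Ioo.mem_nhds hx)).hasDerivAt
  have hu1 : ContDiffOn ℝ 1 (deriv u) (Ioo 0 1) :=
    hu2.deriv_of_isOpen isOpen_Ioo (by norm_num)
  have huD2 : ∀ x ∈ Ioo (0:ℝ) 1, HasDerivAt (deriv u) (deriv (deriv u) x) x := fun x hx =>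
    ((hu1.differentiableOn (by norm_num)).differentiableAt
      (isOpen_Ioo.mem_nhds hx)).hasDerivAt
  have hu'c : ContinuousOn (deriv u) (Ioo 0 1) := hu1.continuousOn
  -- the point a
  set S : Set ℝ := {x | x ∈ Icc 0 t₀ ∧ v x ≤ 0} with hSdef
  have hScl : IsClosed S := by
    have : S = Icc 0 t₀ ∩ v ⁻¹' Iic 0 := by
      ext x; simp [hSdef]
    rw [this]
    exact (hvcont.mono (Icc_subset_Icc le_rfl ht₀.2)).preimage_isClosed_of_isClosed
      isClosed_Icc isClosed_Iic
  have hScpt : IsCompact S := isCompact_Icc.of_isClosed_subset hScl (fun x hx => hx.1)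
  have hS0 : (0:ℝ) ∈ S := ⟨⟨le_rfl, ht₀.1⟩, le_of_eq hv0⟩
  set a := sSup S with hadef
  have haS : a ∈ S := hScpt.sSup_mem ⟨0, hS0⟩
  have haI : a ∈ Icc (0:ℝ) t₀ := haS.1
  have hva : v a ≤ 0 := haS.2
  have hat₀ : a < t₀ := by
    rcases eq_or_lt_of_le haI.2 with h | h
    · exfalso; rw [h] at hva; linarith
    · exact h
  have hvpos_left : ∀ x, a < x → x ≤ t₀ → 0 < v x := by
    intro x hax hxt
    by_contra h
    push_neg at h
    have hxS : x ∈ S := ⟨⟨le_trans haI.1 hax.le, hxt⟩, h⟩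
    exact absurd (le_csSup hScpt.bddAbove hxS) (not_le.2 hax)
  -- the point b
  set T : Set ℝ := {x | x ∈ Icc t₀ 1 ∧ v x ≤ 0} with hTdef
  have hTcl : IsClosed T := by
    have : T = Icc t₀ 1 ∩ v ⁻¹' Iic 0 := by
      ext x; simp [hTdef]
    rw [this]
    exact (hvcont.mono (Icc_subset_Icc ht₀.1 le_rfl)).preimage_isClosed_of_isClosed
      isClosed_Icc isClosed_Iic
  have hTcpt : IsCompact T := isCompact_Icc.of_isClosed_subset hTcl (fun x hx => hx.1)
  have hT1 : (1:ℝ) ∈ T := ⟨⟨ht₀.2, le_rfl⟩, le_of_eq hv1⟩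
  set b := sInf T with hbdef
  have hbT : b ∈ T := hTcpt.sInf_mem ⟨1, hT1⟩
  have hbI : b ∈ Icc t₀ (1:ℝ) := hbT.1
  have hvb : v b ≤ 0 := hbT.2
  have ht₀b : t₀ < b := by
    rcases eq_or_lt_of_le hbI.1 with h | h
    · exfalso; rw [← h] at hvb; linarith
    · exact h
  have hvpos_right : ∀ x, t₀ ≤ x → x < b → 0 < v x := by
    intro x hxt hxb
    by_contra h
    push_neg at h
    have hxT : x ∈ T := ⟨⟨hxt, le_trans hxb.le hbI.2⟩, h⟩
    exact absurd (csInf_le hTcpt.bddBelow hxT) (not_le.2 hxb)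
  have hvpos : ∀ x ∈ Ioo a b, 0 < v x := by
    intro x hx
    rcases le_or_gt x t₀ with h | h
    · exact hvpos_left x hx.1 h
    · exact hvpos_right x h.le hx.2
  have hab01 : Ioo a b ⊆ Ioo (0:ℝ) 1 := fun x hx =>
    ⟨lt_of_le_of_lt haI.1 hx.1, lt_of_lt_of_le hx.2 hbI.2⟩
  -- q and g
  set q : ℝ → ℝ := fun x => (w x - u x) / u x with hqdef
  set g : ℝ → ℝ := fun x => (w' x - deriv u x) * u x - (w x - u x) * deriv u x with hgdef
  have hqD : ∀ x ∈ Ioo (0:ℝ) 1, HasDerivAt q (g x / (u x) ^ 2) x := by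
    intro x hx
    exact ((hw x).sub (huD x hx)).div (huD x hx)
      (ne_of_gt (hupos x (Ioo_subset_Icc_self hx)))
  have hgD : ∀ x ∈ Ioo (0:ℝ) 1, HasDerivAt g
      ((-κ * w x - deriv (deriv u) x) * u x - (w x - u x) * deriv (deriv u) x) x := by
    intro x hx
    have h1 : HasDerivAt (fun y => (w' y - deriv u y) * u y)
        ((-κ * w x - deriv (deriv u) x) * u x + (w' x - deriv u x) * deriv u x) x :=
      ((hw' x).sub (huD2 x hx)).mul (huD x hx)
    have h2 : HasDerivAt (fun y => (w y - u y) * deriv u y)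
        ((w' x - deriv u x) * deriv u x + (w x - u x) * deriv (deriv u) x) x :=
      ((hw x).sub (huD x hx)).mul (huD2 x hx)
    have := h1.sub h2
    exact this.congr_deriv (by ring)
  have hgpos : ∀ x ∈ Ioo a b,
      0 ≤ (-κ * w x - deriv (deriv u) x) * u x - (w x - u x) * deriv (deriv u) x := by
    intro x hx
    have hx01 := hab01 hx
    have hux : 0 < u x := hupos x (Ioo_subset_Icc_self hx01)
    have hvx : 0 < v x := hvpos x hx
    have hwx : 0 < w x := by simp only [hvdef] at hvx; linarith
    have h'' := hu'' x hx01
    nlinarith [mul_nonneg hwx.le (sub_nonneg.2 h'')]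
  have hgcont : ContinuousOn g (Ioo 0 1) :=
    ((hw'c.continuousOn.sub hu'c).mul hu2.continuousOn).sub
      ((hwc.continuousOn.sub hu2.continuousOn).mul hu'c)
  -- monotonicity of g on (a, b)
  have hgmono : ∀ x y, x ∈ Ioo a b → y ∈ Ioo a b → x < y → g x ≤ g y := by
    intro x y hx hy hxy
    have hsub : Icc x y ⊆ Ioo a b := fun z hz => ⟨lt_of_lt_of_le hx.1 hz.1,
      lt_of_le_of_lt hz.2 hy.2⟩
    obtain ⟨c, hc, hceq⟩ := exists_hasDerivAt_eq_slope g
      (fun z => (-κ * w z - deriv (deriv u) z) * u z - (w z - u z) * deriv (deriv u) z)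
      hxy (hgcont.mono (hsub.trans hab01))
      (fun z hz => hgD z (hab01 (hsub (Ioo_subset_Icc_self hz))))
    have h0 := hgpos c (hsub (Ioo_subset_Icc_self hc))
    rw [hceq] at h0
    have hxy' : 0 < y - x := sub_pos.2 hxy
    have h1 : 0 ≤ g y - g x := by
      have h2 := mul_nonneg h0 hxy'.le
      rwa [div_mul_cancel₀ _ (ne_of_gt hxy')] at h2
    linarith
  -- MVT on [a, t₀]
  have hqcont : ContinuousOn q (Icc 0 1) :=
    (hwc.continuousOn.sub hucont).div hucont (fun x hx => ne_of_gt (hupos x hx))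
  have hqa : q a ≤ 0 := by
    have hua : 0 < u a := hupos a ⟨haI.1, le_trans haI.2 ht₀.2⟩
    exact div_nonpos_iff.2 (Or.inr ⟨hva, hua.le⟩)
  have hqt₀ : 0 < q t₀ := div_pos hvt₀ (hupos t₀ ht₀)
  have hqb : q b ≤ 0 := by
    have hub : 0 < u b := hupos b ⟨le_trans ht₀.1 hbI.1, hbI.2⟩
    exact div_nonpos_iff.2 (Or.inr ⟨hvb, hub.le⟩)
  obtain ⟨α, hα, hαeq⟩ := exists_hasDerivAt_eq_slope q (fun z => g z / (u z) ^ 2)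
    hat₀ (hqcont.mono (Icc_subset_Icc haI.1 ht₀.2))
    (fun z hz => hqD z ⟨lt_of_le_of_lt haI.1 hz.1, lt_of_lt_of_le hz.2 ht₀.2⟩)
  obtain ⟨β, hβ, hβeq⟩ := exists_hasDerivAt_eq_slope q (fun z => g z / (u z) ^ 2)
    ht₀b (hqcont.mono (Icc_subset_Icc (le_trans haI.1 hat₀.le) hbI.2))
    (fun z hz => hqD z ⟨lt_of_le_of_lt ht₀.1 hz.1, lt_of_lt_of_le hz.2 hbI.2⟩)
  have hαI : α ∈ Ioo a b := ⟨hα.1, lt_trans hα.2 ht₀b⟩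
  have hβI : β ∈ Ioo t₀ b := hβ
  have hβI' : β ∈ Ioo a b := ⟨lt_trans hat₀ hβ.1, hβ.2⟩
  have huα : 0 < u α := hupos α (Ioo_subset_Icc_self (hab01 hαI))
  have huβ : 0 < u β := hupos β (Ioo_subset_Icc_self (hab01 hβI'))
  have hgα : 0 < g α := by
    have hslope : 0 < (q t₀ - q a) / (t₀ - a) :=
      div_pos (by linarith) (sub_pos.2 hat₀)
    rw [← hαeq] at hslope
    have h2 : (0:ℝ) < u α ^ 2 := by positivity
    calc (0:ℝ) = 0 * u α ^ 2 := by ring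
    _ < (g α / u α ^ 2) * u α ^ 2 := by
        apply mul_lt_mul_of_pos_right hslope h2
    _ = g α := by field_simp
  have hgβ : g β < 0 := by
    have hslope : (q b - q t₀) / (b - t₀) < 0 :=
      div_neg_of_neg_of_pos (by linarith) (sub_pos.2 ht₀b)
    rw [← hβeq] at hslope
    have h2 : (0:ℝ) < u β ^ 2 := by positivity
    have := mul_neg_of_neg_of_pos hslope h2
    calc g β = (g β / u β ^ 2) * u β ^ 2 := by field_simp
    _ < 0 := this
  have hαβ : α < β := lt_trans hα.2 hβ.1
  have := hgmono α β hαI hβI' hαβ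
  linarith

/-- ODE comparison: under the no-conjugate-point condition `κ r² < π²`, a positive `C²`
function with `u'' ≤ -κ u` dominates the solution of `w'' = -κ w` with the same
boundary values. -/
theorem ode_comparison (κ r : ℝ) (hκ : κ * r ^ 2 < Real.pi ^ 2) (u : ℝ → ℝ)
    (hu : ContDiffOn ℝ 2 u (Icc 0 1)) (hupos : ∀ t ∈ Icc (0:ℝ) 1, 0 < u t)
    (hu'' : ∀ t ∈ Ioo (0:ℝ) 1, deriv (deriv u) t ≤ -κ * u t) :
    ∀ t ∈ Icc (0:ℝ) 1,
      sigmaK κ (1 - t) / sigmaK κ 1 * u 0 + sigmaK κ t / sigmaK κ 1 * u 1 ≤ u t := by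
  intro t ht
  by_cases hs : sigmaK κ 1 = 0
  · rw [hs]
    simpa using (hupos t ht).le
  · set w : ℝ → ℝ := fun x => sigmaK κ (1 - x) * (u 0 / sigmaK κ 1)
      + sigmaK κ x * (u 1 / sigmaK κ 1) with hwdef
    set w' : ℝ → ℝ := fun x => -sigmaK' κ (1 - x) * (u 0 / sigmaK κ 1)
      + sigmaK' κ x * (u 1 / sigmaK κ 1) with hw'def
    have hw : ∀ x, HasDerivAt w (w' x) x := by
      intro x
      have h1 : HasDerivAt (fun x : ℝ => sigmaK κ (1 - x)) (-sigmaK' κ (1 - x)) x := by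
        have h2 : HasDerivAt (fun x : ℝ => 1 - x) (-1 : ℝ) x := by
          simpa using (hasDerivAt_id x).const_sub 1
        have := (sigmaK_hasDerivAt κ (1 - x)).comp x h2
        exact this.congr_deriv (by ring)
      exact (h1.mul_const _).add ((sigmaK_hasDerivAt κ x).mul_const _)
    have hw' : ∀ x, HasDerivAt w' (-κ * w x) x := by
      intro x
      have h1 : HasDerivAt (fun x : ℝ => -sigmaK' κ (1 - x)) (-(κ * sigmaK κ (1 - x))) x := by
        have h2 : HasDerivAt (fun x : ℝ => 1 - x) (-1 : ℝ) x := by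
          simpa using (hasDerivAt_id x).const_sub 1
        have h3 := ((sigmaK'_hasDerivAt κ (1 - x)).comp x h2).neg
        exact h3.congr_deriv (by ring)
      have := (h1.mul_const (u 0 / sigmaK κ 1)).add
        ((sigmaK'_hasDerivAt κ x).mul_const (u 1 / sigmaK κ 1))
      exact this.congr_deriv (by
        show _ = -κ * (sigmaK κ (1 - x) * (u 0 / sigmaK κ 1) + sigmaK κ x * (u 1 / sigmaK κ 1))
        ring)
    have hb0 : w 0 = u 0 := by
      simp only [hwdef, sub_zero, sigmaK_zero, zero_mul, add_zero]
      field_simp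
    have hb1 : w 1 = u 1 := by
      simp only [hwdef, sub_self, sigmaK_zero, zero_mul, zero_add]
      field_simp
    have hmain := comparison_core κ u w w' hu hupos hu'' hw hw' hb0 hb1 t ht
    have heq : sigmaK κ (1 - t) / sigmaK κ 1 * u 0 + sigmaK κ t / sigmaK κ 1 * u 1 = w t := by
      simp only [hwdef]
      ring
    rw [heq]
    exact hmain
end

section
/- Example attaining equality in the weighted Brunn–Minkowski inequality on the half-space: let n ≥ 1, N ≥ n, and let m be the measure on ℝⁿ with density ‖x‖^{N-n} with respect to Lebesgue measure. Let A = B_r(e) be the open ball of radius 0 < r < 1 centered at e = (0,…,0,1) and B = 2A = B_{2r}(2e). Then for every t ∈ [0,1], the t-intermediate set satisfies Z_t(A,B) = (1+t)A, and m((1+t)A) = (1+t)^N m(A), so that m(Z_t(A,B))^{1/N} = (1-t) m(A)^{1/N} + t m(B)^{1/N}. -/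
open Real Set MeasureTheory Pointwise

lemma bm_density_smul (n : ℕ) (N c : ℝ) (hc : 0 < c)
    (S : Set (EuclideanSpace ℝ (Fin n))) (hS : MeasurableSet S) :
    (volume.withDensity fun x : EuclideanSpace ℝ (Fin n) =>
        ENNReal.ofReal (‖x‖ ^ (N - n))) (c • S)
      = ENNReal.ofReal (c ^ N) *
        (volume.withDensity fun x : EuclideanSpace ℝ (Fin n) =>
          ENNReal.ofReal (‖x‖ ^ (N - n))) S := by
  have hc' : c ≠ 0 := ne_of_gt hc
  have hmeas : Measurable fun x : EuclideanSpace ℝ (Fin n) =>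
      ENNReal.ofReal (‖x‖ ^ (N - n)) :=
    (measurable_norm.pow_const _).ennreal_ofReal
  have hcS : MeasurableSet (c • S) := hS.const_smul₀ c
  have hrank : Module.finrank ℝ (EuclideanSpace ℝ (Fin n)) = n := finrank_euclideanSpace_fin
  have hmap : Measure.map (c • ·) (volume : Measure (EuclideanSpace ℝ (Fin n)))
      = ENNReal.ofReal |(c ^ n : ℝ)|⁻¹ • volume := by
    rw [Measure.map_addHaar_smul volume hc', hrank, abs_inv]
  have hvol : (volume : Measure (EuclideanSpace ℝ (Fin n)))
      = ENNReal.ofReal (c ^ n) • Measure.map (c • ·) volume := by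
    rw [hmap, smul_smul, ← ENNReal.ofReal_mul (by positivity)]
    rw [abs_of_pos (by positivity : (0:ℝ) < c ^ n), mul_inv_cancel₀ (by positivity)]
    simp
  rw [withDensity_apply _ hcS, withDensity_apply _ hS]
  calc ∫⁻ x in c • S, ENNReal.ofReal (‖x‖ ^ (N - n)) ∂volume
      = ENNReal.ofReal (c ^ n) *
          ∫⁻ x in c • S, ENNReal.ofReal (‖x‖ ^ (N - n)) ∂(Measure.map (c • ·) volume) := by
        rw [← smul_eq_mul, ← lintegral_smul_measure, ← Measure.restrict_smul, ← hvol]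
    _ = ENNReal.ofReal (c ^ n) *
          ∫⁻ x in (c • ·) ⁻¹' (c • S), ENNReal.ofReal (‖c • x‖ ^ (N - n)) ∂volume := by
        rw [setLIntegral_map hcS hmeas (measurable_const_smul c)]
    _ = ENNReal.ofReal (c ^ n) *
          ∫⁻ x in S, ENNReal.ofReal (c ^ (N - n)) * ENNReal.ofReal (‖x‖ ^ (N - n)) ∂volume := by
        congr 1
        have hpre : (c • ·) ⁻¹' (c • S) = S := by
          rw [preimage_smul₀ hc', inv_smul_smul₀ hc']
        rw [hpre]
        refine lintegral_congr fun x => ?_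
        rw [← ENNReal.ofReal_mul (by positivity), ← Real.mul_rpow hc.le (norm_nonneg x),
          ← norm_smul_of_nonneg hc.le]
    _ = ENNReal.ofReal (c ^ N) * ∫⁻ x in S, ENNReal.ofReal (‖x‖ ^ (N - n)) ∂volume := by
        rw [lintegral_const_mul _ hmeas, ← mul_assoc,
          ← ENNReal.ofReal_mul (by positivity), ← Real.rpow_natCast c n,
          ← Real.rpow_add hc]
        ring_nf

lemma bm_Zt_eq {E : Type*} [NormedAddCommGroup E] [NormedSpace ℝ E]
    (e : E) (r t : ℝ) (ht0 : 0 ≤ t) (ht1 : t ≤ 1) :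
    {z : E | ∃ x ∈ Metric.ball e r, ∃ y ∈ Metric.ball ((2:ℝ) • e) (2 * r),
        z = (1 - t) • x + t • y} = (1 + t) • Metric.ball e r := by
  have h1t : (0:ℝ) < 1 + t := by linarith
  ext z
  simp only [mem_setOf_eq]
  constructor
  · rintro ⟨x, hx, y, hy, rfl⟩
    rw [smul_ball (ne_of_gt h1t), Real.norm_of_nonneg h1t.le, Metric.mem_ball, dist_eq_norm]
    have hxe : ‖x - e‖ < r := by rwa [Metric.mem_ball, dist_eq_norm] at hx
    have hye : ‖y - (2:ℝ) • e‖ < 2 * r := by rwa [Metric.mem_ball, dist_eq_norm] at hy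
    have hdecomp : (1 - t) • x + t • y - (1 + t) • e
        = (1 - t) • (x - e) + t • (y - (2:ℝ) • e) := by module
    rw [hdecomp]
    calc ‖(1 - t) • (x - e) + t • (y - (2:ℝ) • e)‖
        ≤ (1 - t) * ‖x - e‖ + t * ‖y - (2:ℝ) • e‖ := by
          refine (norm_add_le _ _).trans ?_
          rw [norm_smul, norm_smul, Real.norm_of_nonneg (by linarith),
            Real.norm_of_nonneg ht0]
      _ < (1 + t) * r := by
          rcases lt_or_eq_of_le ht1 with h | h
          · have h1 : (1 - t) * ‖x - e‖ < (1 - t) * r :=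
              mul_lt_mul_of_pos_left hxe (by linarith)
            have h2 : t * ‖y - (2:ℝ) • e‖ ≤ t * (2 * r) :=
              mul_le_mul_of_nonneg_left hye.le ht0
            nlinarith
          · subst h
            simp only [sub_self, zero_mul, zero_add, one_mul]
            nlinarith
  · rintro ⟨a, ha, rfl⟩
    refine ⟨a, ha, (2:ℝ) • a, ?_, ?_⟩
    · rw [Metric.mem_ball, dist_eq_norm, ← smul_sub, norm_smul, Real.norm_ofNat]
      have : ‖a - e‖ < r := by rwa [Metric.mem_ball, dist_eq_norm] at ha
      linarith
    · module

/-- Equality case of the weighted Brunn–Minkowski inequality on the half-space: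
with the measure of density `‖x‖^(N-n)`, `A` a ball centered at `e = (0,…,0,1)` of
radius `r < 1` and `B = 2A`, the `t`-intermediate set is `(1+t)A`, has measure
`(1+t)^N m(A)`, and equality holds in Brunn–Minkowski. -/
theorem brunn_minkowski_equality_example (n : ℕ) (hn : 1 ≤ n) (N : ℝ) (hN : (n : ℝ) ≤ N)
    (r : ℝ) (hr : 0 < r) (hr1 : r < 1) :
    ∀ t ∈ Icc (0:ℝ) 1,
      letI e : EuclideanSpace ℝ (Fin n) := EuclideanSpace.single ⟨n - 1, by omega⟩ (1 : ℝ)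
      letI m : Measure (EuclideanSpace ℝ (Fin n)) :=
        volume.withDensity fun x => ENNReal.ofReal (‖x‖ ^ (N - n))
      letI A : Set (EuclideanSpace ℝ (Fin n)) := Metric.ball e r
      letI B : Set (EuclideanSpace ℝ (Fin n)) := Metric.ball ((2 : ℝ) • e) (2 * r)
      {z | ∃ x ∈ A, ∃ y ∈ B, z = (1 - t) • x + t • y} = (1 + t) • A ∧
      m ((1 + t) • A) = ENNReal.ofReal ((1 + t) ^ N) * m A ∧
      (m {z | ∃ x ∈ A, ∃ y ∈ B, z = (1 - t) • x + t • y}) ^ (1 / N)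
        = ENNReal.ofReal (1 - t) * (m A) ^ (1 / N) + ENNReal.ofReal t * (m B) ^ (1 / N) := by
  rintro t ⟨ht0, ht1⟩
  set e : EuclideanSpace ℝ (Fin n) := EuclideanSpace.single ⟨n - 1, by omega⟩ (1 : ℝ) with he
  set m : Measure (EuclideanSpace ℝ (Fin n)) :=
    volume.withDensity fun x => ENNReal.ofReal (‖x‖ ^ (N - n)) with hm
  have h1t : (0:ℝ) < 1 + t := by linarith
  have hNpos : (0:ℝ) < N := lt_of_lt_of_le (by exact_mod_cast hn) hN
  have hN0 : N ≠ 0 := ne_of_gt hNpos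
  have hinv : (0:ℝ) ≤ 1 / N := by positivity
  have hZ := bm_Zt_eq e r t ht0 ht1
  have hB : Metric.ball ((2:ℝ) • e) (2 * r) = (2:ℝ) • Metric.ball e r := by
    rw [smul_ball (two_ne_zero : (2:ℝ) ≠ 0), Real.norm_ofNat]
  have hm1 := bm_density_smul n N (1 + t) h1t (Metric.ball e r) measurableSet_ball
  have hm2 := bm_density_smul n N 2 two_pos (Metric.ball e r) measurableSet_ball
  have key : ∀ c : ℝ, 0 < c → (ENNReal.ofReal (c ^ N)) ^ (1 / N) = ENNReal.ofReal c := by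
    intro c hc
    rw [ENNReal.ofReal_rpow_of_pos (Real.rpow_pos_of_pos hc N), ← Real.rpow_mul hc.le,
      mul_one_div_cancel hN0, Real.rpow_one]
  refine ⟨hZ, hm1, ?_⟩
  rw [hZ, hB, hm1, hm2, ENNReal.mul_rpow_of_nonneg _ _ hinv,
    ENNReal.mul_rpow_of_nonneg _ _ hinv,
    key (1 + t) h1t, key 2 two_pos, ← mul_assoc, ← ENNReal.ofReal_mul ht0, ← add_mul,
    ← ENNReal.ofReal_add (by linarith) (by linarith)]
  congr 2
  ring
end
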